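/- Let (A_j)_{j∈J} be a family of commutative rings, R = ∏_{j∈J} A_j their product, and r a natural number. Let M be a finitely presented R-module such that for every j ∈ J the base change A_j ⊗_R M of M along the projection R → A_j is a free A_j-module of rank r. Then M is a free R-module of rank r. -/

import Mathlib

open scoped TensorProduct

/-- Each factor `A j` of a product ring is an algebra over the product via the projection. -/
noncomputable instance piEvalAlgebra {J : Type*} {A : J → Type*} [∀ j, CommRing (A j)]
    {j : J} : Algebra (∀ j', A j') (A j) :=
  (Pi.evalRingHom A j).toAlgebra

lemma piEval_algebraMap_apply {J : Type*} {A : J → Type*} [∀ j, CommRing (A j)]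
    {j : J} (c : ∀ j', A j') : algebraMap (∀ j', A j') (A j) c = c j := rfl

lemma piEval_smul_one {J : Type*} {A : J → Type*} [∀ j, CommRing (A j)]
    {j : J} (c : ∀ j', A j') : c • (1 : A j) = c j := by
  rw [Algebra.smul_def, mul_one, piEval_algebraMap_apply]

/-- If `c` has the right coordinates at `j`, then `1 ⊗ c` equals `y`. -/
lemma piEval_tmul_eq {J : Type*} {A : J → Type*} [∀ j, CommRing (A j)] {k : ℕ} {j : J}
    (y : (A j) ⊗[∀ j', A j'] (Fin k → ∀ j', A j')) (c : Fin k → ∀ j', A j')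
    (hc : ∀ i, c i j = TensorProduct.piScalarRight (∀ j', A j') (A j) (A j) (Fin k) y i) :
    (1 : A j) ⊗ₜ[∀ j', A j'] c = y := by
  apply (TensorProduct.piScalarRight (∀ j', A j') (A j) (A j) (Fin k)).injective
  funext i
  rw [TensorProduct.piScalarRight_apply, TensorProduct.piScalarRightHom_tmul]
  show c i • (1 : A j) = _
  rw [piEval_smul_one]
  exact hc i

/-- A finitely presented module over a product of commutative rings all of whose base
changes to the factors are free of the same rank `r` is itself free of rank `r`. -/
theorem free_of_base_changes_free
    {J : Type*} (A : J → Type*) [∀ j, CommRing (A j)] (r : ℕ)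
    (M : Type*) [AddCommGroup M] [Module (∀ j, A j) M]
    [Module.FinitePresentation (∀ j, A j) M]
    (hfree : ∀ j, Nonempty (((A j) ⊗[∀ j', A j'] M) ≃ₗ[A j] (Fin r → A j))) :
    Nonempty (M ≃ₗ[∀ j, A j] (Fin r → ∀ j, A j)) := by
  set R := ∀ j, A j with hR
  -- a finite presentation
  obtain ⟨n, π, hπ⟩ := Module.Finite.exists_fin' R M
  have hker : (LinearMap.ker π).FG := Module.FinitePresentation.fg_ker π hπ
  obtain ⟨m, s, hs⟩ := Submodule.fg_iff_exists_fin_generating_family.mp hker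
  set f : (Fin m → R) →ₗ[R] (Fin n → R) := Fintype.linearCombination R s with hf
  have hrange : LinearMap.range f = LinearMap.ker π := by
    rw [hf, Fintype.range_linearCombination, hs]
  have hexact : Function.Exact f π := LinearMap.exact_iff.mpr hrange.symm
  -- the comparison map
  set φ : M →ₗ[R] (∀ j, (A j) ⊗[R] M) :=
    LinearMap.pi (fun j => TensorProduct.mk R (A j) M 1) with hφ
  have hφ_apply : ∀ (u : M) (j : J), φ u j = (1 : A j) ⊗ₜ[R] u := fun _ _ => rfl
  -- surjectivity
  have hsurj : Function.Surjective φ := by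
    intro x
    have hy : ∀ j, ∃ y : (A j) ⊗[R] (Fin n → R),
        LinearMap.lTensor (A j) π y = x j := fun j =>
      LinearMap.lTensor_surjective (A j) hπ (x j)
    choose y hy using hy
    set c : Fin n → R := fun i j => TensorProduct.piScalarRight R (A j) (A j) (Fin n) (y j) i
    refine ⟨π c, funext fun j => ?_⟩
    rw [hφ_apply]
    have h1 : (1 : A j) ⊗ₜ[R] c = y j := piEval_tmul_eq (y j) c (fun i => rfl)
    calc (1 : A j) ⊗ₜ[R] (π c) = LinearMap.lTensor (A j) π ((1 : A j) ⊗ₜ[R] c) := by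
          rw [LinearMap.lTensor_tmul]
      _ = x j := by rw [h1, hy j]
  -- injectivity
  have hinj : Function.Injective φ := by
    rw [injective_iff_map_eq_zero]
    intro u hu
    obtain ⟨c, rfl⟩ := hπ u
    have h0 : ∀ j, LinearMap.lTensor (A j) π ((1 : A j) ⊗ₜ[R] c) = 0 := by
      intro j
      rw [LinearMap.lTensor_tmul]
      have := congrFun hu j
      rwa [hφ_apply] at this
    have hw : ∀ j, ∃ w : (A j) ⊗[R] (Fin m → R),
        LinearMap.lTensor (A j) f w = (1 : A j) ⊗ₜ[R] c := by
      intro j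
      exact (lTensor_exact (A j) hexact hπ ((1 : A j) ⊗ₜ[R] c)).mp (h0 j)
    choose w hw using hw
    set d : Fin m → R := fun i j => TensorProduct.piScalarRight R (A j) (A j) (Fin m) (w j) i
    have hfd : f d = c := by
      funext i
      funext j
      have h1 : (1 : A j) ⊗ₜ[R] d = w j := piEval_tmul_eq (w j) d (fun i => rfl)
      have h2 : (1 : A j) ⊗ₜ[R] (f d) = (1 : A j) ⊗ₜ[R] c := by
        calc (1 : A j) ⊗ₜ[R] (f d)
            = LinearMap.lTensor (A j) f ((1 : A j) ⊗ₜ[R] d) := by rw [LinearMap.lTensor_tmul]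
          _ = (1 : A j) ⊗ₜ[R] c := by rw [h1, hw j]
      have h3 := congrFun (congrArg (TensorProduct.piScalarRight R (A j) (A j) (Fin n)) h2) i
      rw [TensorProduct.piScalarRight_apply, TensorProduct.piScalarRight_apply,
        TensorProduct.piScalarRightHom_tmul, TensorProduct.piScalarRightHom_tmul] at h3
      have h3' : f d i • (1 : A j) = c i • (1 : A j) := h3
      rw [piEval_smul_one, piEval_smul_one] at h3'
      exact h3'
    have : π (f d) = 0 := by
      have : f d ∈ LinearMap.ker π := hrange ▸ LinearMap.mem_range_self f d
      simpa using this
    rw [← hfd, this]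
  -- assemble the equivalence
  let e1 : M ≃ₗ[R] (∀ j, (A j) ⊗[R] M) := LinearEquiv.ofBijective φ ⟨hinj, hsurj⟩
  let e2 : (∀ j, (A j) ⊗[R] M) ≃ₗ[R] (∀ j, Fin r → A j) :=
    LinearEquiv.piCongrRight (fun j => ((hfree j).some.restrictScalars R))
  let e3 : (∀ j, Fin r → A j) ≃ₗ[R] (Fin r → R) :=
    { toFun := fun x i j => x j i
      invFun := fun y j i => y i j
      map_add' := fun _ _ => rfl
      map_smul' := fun _ _ => rfl
      left_inv := fun _ => rfl
      right_inv := fun _ => rfl }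
  exact ⟨e1 ≪≫ₗ e2 ≪≫ₗ e3⟩
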